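/- Let N ≥ 2, let W ∈ ℝ^{N×N} satisfy W·1_N = 0 and have kernel exactly span{1_N}, and let v_1,…,v_N, σ_1,…,σ_N ∈ ℝ^l. Then the following are equivalent: (a) σ_i = Σ_{j≠i} v_j for every i; (b) there exist y_1,…,y_N ∈ ℝ^l such that (N−1)·v_i − σ_i = Σ_{j=1}^N W_{ji}·y_j for every i, and v_i + σ_i = v_j + σ_j for all i, j. -/

import Mathlib

open Matrix Finset

/-- Key surjectivity lemma: any vector with zero sum is in the range of `Wᵀ`. -/
lemma key_surj (N : ℕ) (hN : 2 ≤ N) (W : Matrix (Fin N) (Fin N) ℝ)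
    (hWrow : W *ᵥ (fun _ => (1 : ℝ)) = 0)
    (hWker : ∀ z : Fin N → ℝ, W *ᵥ z = 0 ↔ ∃ a : ℝ, z = fun _ => a)
    (u : Fin N → ℝ) (hu : ∑ i, u i = 0) :
    ∃ z : Fin N → ℝ, ∀ i, ∑ j, W j i * z j = u i := by
  classical
  -- the sum functional
  let f : (Fin N → ℝ) →ₗ[ℝ] ℝ := ∑ i : Fin N, LinearMap.proj i
  have hf : ∀ w : Fin N → ℝ, f w = ∑ i, w i := by
    intro w; simp [f]
  -- kernel of W.mulVecLin is the span of the all ones vector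
  have hker : LinearMap.ker W.mulVecLin = Submodule.span ℝ {fun _ => (1 : ℝ)} := by
    ext z
    simp only [LinearMap.mem_ker, Matrix.mulVecLin_apply, hWker,
      Submodule.mem_span_singleton]
    constructor
    · rintro ⟨a, rfl⟩; exact ⟨a, by funext k; simp⟩
    · rintro ⟨a, rfl⟩; exact ⟨a, by funext k; simp⟩
  have hone : (fun _ => (1 : ℝ)) ≠ (0 : Fin N → ℝ) := by
    intro h
    have := congrFun h ⟨0, by omega⟩
    simp at this
  have hkerdim : Module.finrank ℝ (LinearMap.ker W.mulVecLin) = 1 := by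
    rw [hker]; exact finrank_span_singleton hone
  have hdom : Module.finrank ℝ (Fin N → ℝ) = N := by simp
  have hrn := LinearMap.finrank_range_add_finrank_ker W.mulVecLin
  rw [hdom, hkerdim] at hrn
  have hrankW : W.rank = N - 1 := by
    have : W.rank = Module.finrank ℝ (LinearMap.range W.mulVecLin) := rfl
    omega
  have hrankWT : Wᵀ.rank = N - 1 := by rw [Matrix.rank_transpose]; exact hrankW
  -- range of Wᵀ is contained in ker f
  have hle : LinearMap.range Wᵀ.mulVecLin ≤ LinearMap.ker f := by
    rintro w ⟨z, rfl⟩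
    rw [LinearMap.mem_ker, hf]
    have : ∀ i, (Wᵀ.mulVecLin z) i = ∑ j, W j i * z j := by
      intro i; simp [Matrix.mulVecLin_apply, Matrix.mulVec, Matrix.vecMul,
        dotProduct, mul_comm]
    simp only [this]
    rw [Finset.sum_comm]
    have h0 : ∀ j, ∑ i, W j i * z j = 0 := by
      intro j
      have := congrFun hWrow j
      simp [Matrix.mulVec, dotProduct] at this
      rw [← Finset.sum_mul, this, zero_mul]
    simp [h0]
  -- finrank of ker f is N - 1
  have hfsurj : LinearMap.range f = ⊤ := by
    rw [LinearMap.range_eq_top]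
    intro c
    refine ⟨fun _ => c / N, ?_⟩
    rw [hf]
    have hN0 : (N : ℝ) ≠ 0 := by positivity
    rw [Finset.sum_const, Finset.card_univ, Fintype.card_fin, nsmul_eq_mul]
    field_simp
  have hrnf := LinearMap.finrank_range_add_finrank_ker f
  rw [hdom, hfsurj] at hrnf
  have hrange1 : Module.finrank ℝ (⊤ : Submodule ℝ ℝ) = 1 := by simp
  rw [hrange1] at hrnf
  have hkerf : Module.finrank ℝ (LinearMap.ker f) = N - 1 := by omega
  -- equality of subspaces
  have heq : LinearMap.range Wᵀ.mulVecLin = LinearMap.ker f := by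
    apply Submodule.eq_of_le_of_finrank_le hle
    have : Module.finrank ℝ (LinearMap.range Wᵀ.mulVecLin) = N - 1 := hrankWT
    omega
  have hu' : u ∈ LinearMap.ker f := by rw [LinearMap.mem_ker, hf]; exact hu
  rw [← heq] at hu'
  obtain ⟨z, hz⟩ := hu'
  refine ⟨z, fun i => ?_⟩
  have := congrFun hz i
  simpa [Matrix.mulVecLin_apply, Matrix.mulVec, Matrix.vecMul,
    dotProduct, mul_comm] using this

theorem stmt_9
    (N l : ℕ) (hN : 2 ≤ N)
    (W : Matrix (Fin N) (Fin N) ℝ)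
    (hWrow : W *ᵥ (fun _ => (1 : ℝ)) = 0)
    (hWker : ∀ z : Fin N → ℝ, W *ᵥ z = 0 ↔ ∃ a : ℝ, z = fun _ => a)
    (v σ : Fin N → Fin l → ℝ) :
    (∀ i, σ i = ∑ j ∈ Finset.univ.erase i, v j) ↔
    (∃ y : Fin N → Fin l → ℝ,
      (∀ i, ((N : ℝ) - 1) • v i - σ i = ∑ j, W j i • y j) ∧
      (∀ i j, v i + σ i = v j + σ j)) := by
  classical
  have herase : ∀ i : Fin N, ∑ j ∈ Finset.univ.erase i, v j = (∑ j, v j) - v i := by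
    intro i
    rw [eq_sub_iff_add_eq, Finset.sum_erase_add _ _ (Finset.mem_univ i)]
  constructor
  · intro h
    -- for each coordinate k, find a preimage
    have hch : ∀ k : Fin l, ∃ z : Fin N → ℝ,
        ∀ i, ∑ j, W j i * z j = (N : ℝ) * v i k - (∑ j, v j) k := by
      intro k
      apply key_surj N hN W hWrow hWker
      rw [Finset.sum_sub_distrib]
      simp [Finset.mul_sum, Finset.sum_apply, mul_comm]
    choose z hz using hch
    refine ⟨fun j k => z k j, fun i => ?_, fun i j => ?_⟩
    · funext k
      have hσ : σ i k = (∑ j, v j) k - v i k := by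
        rw [h i, herase i]; simp
      simp only [Pi.sub_apply, Pi.smul_apply, smul_eq_mul, Finset.sum_apply]
      rw [hσ, hz k i]
      ring
    · have h1 : v i + σ i = ∑ j, v j := by
        rw [h i, herase i]; ring
      have h2 : v j + σ j = ∑ j, v j := by
        rw [h j, herase j]; ring
      rw [h1, h2]
  · rintro ⟨y, hy, hcons⟩
    intro i
    rw [herase i]
    -- sum the first constraint over all i
    have hsum : ∑ i, (((N : ℝ) - 1) • v i - σ i) = 0 := by
      rw [Finset.sum_congr rfl (fun i _ => hy i)]
      funext k
      simp only [Finset.sum_apply, Pi.smul_apply, smul_eq_mul, Pi.zero_apply]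
      rw [Finset.sum_comm]
      have h0 : ∀ j, ∑ i, W j i * y j k = 0 := by
        intro j
        have := congrFun hWrow j
        simp [Matrix.mulVec, dotProduct] at this
        rw [← Finset.sum_mul, this, zero_mul]
      simp [h0]
    -- consensus gives σ i = c - v i with c = v 0 + σ 0
    set c := v ⟨0, by omega⟩ + σ ⟨0, by omega⟩ with hc
    have hσc : ∀ i, σ i = c - v i := by
      intro i
      have := hcons i ⟨0, by omega⟩
      rw [hc, ← this]; ring
    have hN0 : (N : ℝ) ≠ 0 := by positivity
    have hcS : c = ∑ j, v j := by
      funext k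
      have hk := congrFun hsum k
      simp only [Finset.sum_apply, Pi.sub_apply, Pi.smul_apply, smul_eq_mul,
        Pi.zero_apply] at hk
      have hk2 : ∑ i, ((N : ℝ) * v i k - c k) = 0 := by
        rw [← hk]
        apply Finset.sum_congr rfl
        intro i _
        rw [hσc i]
        simp only [Pi.sub_apply]
        ring
      rw [Finset.sum_sub_distrib, Finset.sum_const, Finset.card_univ,
        Fintype.card_fin, nsmul_eq_mul, ← Finset.mul_sum, sub_eq_zero] at hk2
      have : (∑ i, v i k) = c k := by
        exact mul_left_cancel₀ hN0 hk2
      rw [Finset.sum_apply, ← this]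
    rw [hσc i, hcS]
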